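/- PRESS identity: for ridge regression (or OLS) with hat matrix H having H_{μμ} ≠ 1 for all μ, the leave-one-out cross validation squared error equals (1/(2M)) Σ_μ ((y_μ − ŷ_μ)/(1 − H_{μμ}))², where ŷ = Hy and ŷ_μ({D}_{\setminus μ}) is the prediction at row μ from the estimator fitted without row μ. -/

import Mathlib

open Matrix

lemma vvmv {n : Type*} [Fintype n] (a b w : n → ℝ) :
    vecMulVec a b *ᵥ w = (b ⬝ᵥ w) • a := by
  ext i
  simp [mulVec, vecMulVec_apply, dotProduct, Finset.mul_sum, mul_assoc, mul_comm, mul_left_comm]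

lemma vvT {n : Type*} (a b : n → ℝ) : (vecMulVec a b)ᵀ = vecMulVec b a := by
  ext i j; simp [vecMulVec_apply, mul_comm]

lemma dsym {n : Type*} [Fintype n] (B : Matrix n n ℝ) (hB : Bᵀ = B) (v w : n → ℝ) :
    v ⬝ᵥ (B *ᵥ w) = (B *ᵥ v) ⬝ᵥ w := by
  rw [dotProduct_mulVec, ← vecMul_transpose, hB]

/-- PRESS identity for ridge regression: the leave-one-out cross-validation squared error
equals `(1/(2M)) Σ_μ ((y_μ − ŷ_μ)/(1 − H_{μμ}))²`. -/
theorem stmt4 (M N : ℕ) (hM : 0 < M) (hN : 0 < N)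
    (F : Matrix (Fin M) (Fin N) ℝ) (y : Fin M → ℝ) (lam : ℝ) (hlam : 0 ≤ lam)
    -- the ridge matrix A = FᵀF/N + λI and smoother H = (1/N) F A⁻¹ Fᵀ
    (A : Matrix (Fin N) (Fin N) ℝ)
    (hA : A = (N : ℝ)⁻¹ • (Fᵀ * F) + lam • (1 : Matrix (Fin N) (Fin N) ℝ))
    (hAunit : IsUnit A)
    (H : Matrix (Fin M) (Fin M) ℝ)
    (hH : H = (N : ℝ)⁻¹ • (F * A⁻¹ * Fᵀ))
    (hHd : ∀ μ, H μ μ ≠ 1)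
    -- leave-one-out design matrices, ridge matrices and estimators
    (Fs : (μ : Fin M) → Matrix {ν : Fin M // ν ≠ μ} (Fin N) ℝ)
    (hFs : ∀ μ, Fs μ = Matrix.submatrix F Subtype.val id)
    (As : (μ : Fin M) → Matrix (Fin N) (Fin N) ℝ)
    (hAs : ∀ μ, As μ = (N : ℝ)⁻¹ • ((Fs μ)ᵀ * Fs μ) + lam • (1 : Matrix (Fin N) (Fin N) ℝ))
    (hAsunit : ∀ μ, IsUnit (As μ))
    (xs : (μ : Fin M) → Fin N → ℝ)
    (hxs : ∀ μ, xs μ = (Real.sqrt N)⁻¹ •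
      (((As μ)⁻¹ * (Fs μ)ᵀ) *ᵥ (fun ν : {ν : Fin M // ν ≠ μ} => y ν.val))) :
    -- LOOCV error equals the PRESS formula
    (2 * M : ℝ)⁻¹ * ∑ μ : Fin M, (y μ - (Real.sqrt N)⁻¹ * (F μ ⬝ᵥ xs μ)) ^ 2
      = (2 * M : ℝ)⁻¹ * ∑ μ : Fin M, ((y μ - (H *ᵥ y) μ) / (1 - H μ μ)) ^ 2 := by
  have hNne : (N : ℝ) ≠ 0 := Nat.cast_ne_zero.mpr hN.ne'
  have hAdet : IsUnit A.det := (isUnit_iff_isUnit_det A).mp hAunit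
  have hAT : Aᵀ = A := by
    rw [hA]; simp [transpose_add, transpose_smul, transpose_mul, Matrix.transpose_one]
  have hAiT : (A⁻¹)ᵀ = A⁻¹ := by rw [transpose_nonsing_inv, hAT]
  congr 1
  apply Finset.sum_congr rfl
  intro μ _
  set f : Fin N → ℝ := F μ with hfdef
  set ys : {ν : Fin M // ν ≠ μ} → ℝ := fun ν => y ν.val with hys
  set g : Fin N → ℝ := A⁻¹ *ᵥ f with hg
  set h : ℝ := H μ μ with hh
  have hc1 : 1 - h ≠ 0 := sub_ne_zero.mpr fun e => hHd μ e.symm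
  set c : ℝ := (1 - h)⁻¹ with hc
  -- structure of the leave-one-out Gram matrix
  have hFtF : (Fs μ)ᵀ * Fs μ = Fᵀ * F - vecMulVec f f := by
    ext i j
    simp only [hFs, Matrix.mul_apply, transpose_apply, submatrix_apply, id,
      Matrix.sub_apply, vecMulVec_apply]
    rw [← Finset.sum_subtype (Finset.univ.erase μ)
      (fun ν => by simp [Finset.mem_erase]) (fun ν => F ν i * F ν j),
      eq_sub_iff_add_eq, Finset.sum_erase_add _ _ (Finset.mem_univ μ)]
  have hAsA : As μ = A - (N : ℝ)⁻¹ • vecMulVec f f := by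
    rw [hAs μ, hFtF, hA, smul_sub]; abel
  have hAsT : (As μ)ᵀ = As μ := by
    rw [hAsA]; simp [transpose_sub, transpose_smul, hAT, vvT]
  have hBsT : ((As μ)⁻¹)ᵀ = (As μ)⁻¹ := by rw [transpose_nonsing_inv, hAsT]
  -- leave-one-out FᵀY
  have hFty : (Fs μ)ᵀ *ᵥ ys = Fᵀ *ᵥ y - y μ • f := by
    ext i
    simp only [hFs, mulVec, dotProduct, transpose_apply, submatrix_apply, id,
      Pi.sub_apply, Pi.smul_apply, smul_eq_mul, hys]
    rw [← Finset.sum_subtype (Finset.univ.erase μ)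
      (fun ν => by simp [Finset.mem_erase]) (fun ν => F ν i * y ν),
      eq_sub_iff_add_eq]
    rw [show y μ * f i = F μ i * y μ by rw [hfdef]; ring,
      Finset.sum_erase_add _ _ (Finset.mem_univ μ)]
  -- hat-matrix entries
  have key1 : ∀ (B : Matrix (Fin N) (Fin N) ℝ) (w : Fin M → ℝ),
      ((F * B * Fᵀ) *ᵥ w) μ = f ⬝ᵥ (B *ᵥ (Fᵀ *ᵥ w)) := by
    intro B w
    rw [← mulVec_mulVec, ← mulVec_mulVec]
    simp [mulVec, dotProduct]
    rfl
  have hquad : (F * A⁻¹ * Fᵀ) μ μ = f ⬝ᵥ (A⁻¹ *ᵥ f) := by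
    rw [Matrix.mul_assoc, mul_apply]
    simp [mulVec, dotProduct, mul_apply, Finset.mul_sum]
    rfl
  have hfg : f ⬝ᵥ g = (N : ℝ) * h := by
    rw [hg, hh, hH]
    simp only [Matrix.smul_apply, smul_eq_mul]
    rw [hquad, ← mul_assoc, mul_inv_cancel₀ hNne, one_mul]
  have hHy : (H *ᵥ y) μ = (N : ℝ)⁻¹ * (f ⬝ᵥ (A⁻¹ *ᵥ (Fᵀ *ᵥ y))) := by
    rw [hH, smul_mulVec]
    simp only [Pi.smul_apply, smul_eq_mul]
    rw [key1]
  -- Sherman–Morrison style identity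
  have hAg : A *ᵥ g = f := by
    rw [hg, mulVec_mulVec, mul_nonsing_inv A hAdet, one_mulVec]
  have hP : (As μ)⁻¹ *ᵥ f = c • g := by
    have hstep : As μ *ᵥ (c • g) = f := by
      rw [hAsA, sub_mulVec, mulVec_smul, mulVec_smul, hAg, smul_mulVec, vvmv, hfg]
      ext i
      simp only [Pi.sub_apply, Pi.smul_apply, smul_eq_mul, hc]
      field_simp
    rw [← hstep, mulVec_mulVec, nonsing_inv_mul (As μ)
      ((isUnit_iff_isUnit_det (As μ)).mp (hAsunit μ)), one_mulVec]
  -- the prediction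
  have hsq : (Real.sqrt N)⁻¹ * (Real.sqrt N)⁻¹ = (N : ℝ)⁻¹ := by
    rw [← mul_inv, Real.mul_self_sqrt (Nat.cast_nonneg N)]
  have hpred : (Real.sqrt N)⁻¹ * (F μ ⬝ᵥ xs μ)
      = (N : ℝ)⁻¹ * (c * ((N : ℝ) * (H *ᵥ y) μ - y μ * ((N : ℝ) * h))) := by
    rw [hxs μ, dotProduct_smul, ← mulVec_mulVec, hFty]
    have : f ⬝ᵥ ((As μ)⁻¹ *ᵥ (Fᵀ *ᵥ y - y μ • f))
        = c * (g ⬝ᵥ (Fᵀ *ᵥ y - y μ • f)) := by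
      rw [dsym _ hBsT, hP, smul_dotProduct, smul_eq_mul]
    rw [show F μ ⬝ᵥ ((As μ)⁻¹ *ᵥ (Fᵀ *ᵥ y - y μ • f)) = f ⬝ᵥ ((As μ)⁻¹ *ᵥ (Fᵀ *ᵥ y - y μ • f)) from rfl, this]
    have hgd : g ⬝ᵥ (Fᵀ *ᵥ y - y μ • f) = (N : ℝ) * (H *ᵥ y) μ - y μ * ((N : ℝ) * h) := by
      rw [dotProduct_sub, dotProduct_smul, smul_eq_mul, hg, ← dsym _ hAiT, ← dsym _ hAiT,
        ← hg, hfg, hHy]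
      field_simp
    rw [hgd, smul_eq_mul, ← mul_assoc, hsq]
  rw [hpred]
  congr 1
  rw [hc, eq_div_iff hc1]
  field_simp
  ring
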